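/- (Alishahi's torsion order lemma) Let C and C' be chain complexes of F[H]-modules and suppose there exist chain maps f : C → C' and g : C' → C and a natural number t such that g ∘ f is chain homotopic to H^t · id_C and f ∘ g is chain homotopic to H^t · id_{C'}. If the maximal H-torsion orders ord(H_*(C)) and ord(H_*(C')) of the homologies are finite, then |ord(H_*(C)) − ord(H_*(C'))| ≤ t. -/

import Mathlib

open Polynomial

/-- The coefficient ring `F[H]` with `F = ℤ/2ℤ`; the variable `H` is `Polynomial.X`. -/
abbrev R2 : Type := Polynomial (ZMod 2)

/-- An element of an `F[H]`-module is `H`-torsion if some power of `H` kills it. -/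
def IsHTorsion {M : Type*} [AddCommGroup M] [Module R2 M] (x : M) : Prop :=
  ∃ n : ℕ, (X : R2) ^ n • x = 0

/-- The `H`-torsion order of an element: the least `n` with `H^n • x = 0`. -/
noncomputable def ordElem {M : Type*} [AddCommGroup M] [Module R2 M] (x : M) : ℕ :=
  sInf {n : ℕ | (X : R2) ^ n • x = 0}

open CategoryTheory

/-- The set of `H`-torsion orders occurring among torsion elements of the total
homology of a chain complex of `F[H]`-modules. -/
noncomputable def homologyTorsionOrders (C : ChainComplex (ModuleCat R2) ℕ) : Set ℕ :=
  {n : ℕ | ∃ (i : ℕ) (x : C.homology i), IsHTorsion x ∧ n = ordElem x}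

/-- The maximal `H`-torsion order of the total homology `H_*(C)`. -/
noncomputable def ordHomology (C : ChainComplex (ModuleCat R2) ℕ) : ℕ :=
  sSup (homologyTorsionOrders C)

open HomologicalComplex

lemma ordElem_spec {M : Type*} [AddCommGroup M] [Module R2 M] {x : M}
    (h : IsHTorsion x) : (X : R2) ^ (ordElem x) • x = 0 :=
  Nat.sInf_mem h

lemma ordElem_le {M : Type*} [AddCommGroup M] [Module R2 M] {x : M} {n : ℕ}
    (h : (X : R2) ^ n • x = 0) : ordElem x ≤ n :=
  Nat.sInf_le h

lemma homologyMap_smul' {C D : ChainComplex (ModuleCat R2) ℕ} (φ : C ⟶ D) (r : R2) (i : ℕ) :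
    homologyMap (r • φ) i = r • homologyMap φ i := by
  have : (shortComplexFunctor (ModuleCat R2) _ i).map (r • φ)
      = r • (shortComplexFunctor (ModuleCat R2) _ i).map φ := by
    ext <;> rfl
  dsimp only [homologyMap]
  rw [this, ShortComplex.homologyMap_smul]
  rfl

lemma zero_mem_homologyTorsionOrders (C : ChainComplex (ModuleCat R2) ℕ) :
    0 ∈ homologyTorsionOrders C := by
  refine ⟨0, 0, ⟨0, by simp⟩, ?_⟩
  have : ordElem (0 : C.homology 0) ≤ 0 := ordElem_le (by simp)
  omega

lemma ordHomology_le_aux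
    (C C' : ChainComplex (ModuleCat R2) ℕ) (f : C ⟶ C') (g : C' ⟶ C) (t : ℕ)
    (h₁ : Nonempty (Homotopy (f ≫ g) (((X : R2) ^ t) • 𝟙 C)))
    (hC' : BddAbove (homologyTorsionOrders C')) :
    ordHomology C ≤ ordHomology C' + t := by
  apply csSup_le ⟨0, zero_mem_homologyTorsionOrders C⟩
  rintro n ⟨i, x, hx, rfl⟩
  set y : C'.homology i := homologyMap f i x with hy
  have hytor : IsHTorsion y := by
    obtain ⟨m, hm⟩ := hx
    exact ⟨m, by rw [hy, ← map_smul, hm, map_zero]⟩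
  have hmem : ordElem y ∈ homologyTorsionOrders C' := ⟨i, y, hytor, rfl⟩
  have h1 : ordElem y ≤ ordHomology C' := le_csSup hC' hmem
  -- g_* y = X^t • x
  have hgy : homologyMap g i y = (X : R2) ^ t • x := by
    have heq : homologyMap (f ≫ g) i = homologyMap (((X : R2) ^ t) • 𝟙 C) i :=
      h₁.some.homologyMap_eq i
    rw [homologyMap_comp, homologyMap_smul', homologyMap_id] at heq
    have := congrFun (congrArg (fun ψ : C.homology i ⟶ C.homology i => (ψ : _ → _)) heq) x
    simpa [hy] using this
  have h2 : (X : R2) ^ (ordElem y + t) • x = 0 := by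
    have := congrArg (homologyMap g i) (ordElem_spec hytor)
    rw [map_smul, map_zero, hgy, smul_smul, ← pow_add] at this
    exact this
  have h3 : ordElem x ≤ ordElem y + t := ordElem_le h2
  omega

/-- Alishahi's torsion order lemma: if `g ∘ f ≃ H^t • id` and `f ∘ g ≃ H^t • id`
up to chain homotopy, then the maximal `H`-torsion orders of the homologies of
`C` and `C'` (assumed finite) differ by at most `t`. -/
theorem ordHomology_diff_le
    (C C' : ChainComplex (ModuleCat R2) ℕ) (f : C ⟶ C') (g : C' ⟶ C) (t : ℕ)
    (h₁ : Nonempty (Homotopy (f ≫ g) (((X : R2) ^ t) • 𝟙 C)))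
    (h₂ : Nonempty (Homotopy (g ≫ f) (((X : R2) ^ t) • 𝟙 C')))
    (hC : BddAbove (homologyTorsionOrders C))
    (hC' : BddAbove (homologyTorsionOrders C')) :
    |(ordHomology C : ℤ) - (ordHomology C' : ℤ)| ≤ (t : ℤ) := by
  have hA := ordHomology_le_aux C C' f g t h₁ hC'
  have hB := ordHomology_le_aux C' C g f t h₂ hC
  rw [abs_sub_le_iff]
  constructor <;> omega
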